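/- Let n ≥ 1 be an integer, ℓ ∈ ℕ, let J ⊆ ℕ be a finite nonempty set, and let σ_j ≥ 0 for j ∈ J with σ_j = 0 for at least one j ∈ J. Define g(η) = min_{j ∈ J} ((j−ℓ)η + 2σ_j) and h(η) = (n+η)/(n+η−g(η)) when g(η) < n + η, h(η) = ∞ otherwise. Assume 1 < sup_{η ∈ [0,∞)} h(η) < ∞. Then h is real-valued on [0,∞), the supremum is attained, and there exists η̄ ∈ (0,∞) such that h(η̄) = sup_{η ≥ 0} h(η), h is nondecreasing on [0, η̄], and h is nonincreasing on [η̄, ∞). -/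

import Mathlib

open scoped Classical ENNReal

/-- The scaling function `g(η) = min_{j ∈ J} ((j−ℓ)η + 2σ_j)`. -/
noncomputable def gFun (ℓ : ℕ) (J : Finset ℕ) (hJ : J.Nonempty) (σ : ℕ → ℝ) (η : ℝ) : ℝ :=
  J.inf' hJ (fun j => ((j : ℝ) - ℓ) * η + 2 * σ j)

/-- The (real-valued) function `h(η) = (n+η)/(n+η−g(η))`. -/
noncomputable def hFun (n ℓ : ℕ) (J : Finset ℕ) (hJ : J.Nonempty) (σ : ℕ → ℝ) (η : ℝ) : ℝ :=
  ((n : ℝ) + η) / ((n : ℝ) + η - gFun ℓ J hJ σ η)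

/-- The extended-real-valued function `h`, equal to `∞` when `g(η) ≥ n + η`. -/
noncomputable def hExt (n ℓ : ℕ) (J : Finset ℕ) (hJ : J.Nonempty) (σ : ℕ → ℝ) (η : ℝ) :
    ℝ≥0∞ :=
  if gFun ℓ J hJ σ η < (n : ℝ) + η then ENNReal.ofReal (hFun n ℓ J hJ σ η) else ⊤

lemma gFun_le {ℓ : ℕ} {J : Finset ℕ} (hJ : J.Nonempty) {σ : ℕ → ℝ} {j : ℕ} (hj : j ∈ J)
    (η : ℝ) : gFun ℓ J hJ σ η ≤ ((j : ℝ) - ℓ) * η + 2 * σ j :=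
  Finset.inf'_le _ hj

lemma gFun_cont {ℓ : ℕ} {J : Finset ℕ} (hJ : J.Nonempty) {σ : ℕ → ℝ} :
    Continuous (gFun ℓ J hJ σ) :=
  Continuous.finset_inf'_apply hJ (fun j _ => by continuity)

lemma gFun_concave {ℓ : ℕ} {J : Finset ℕ} (hJ : J.Nonempty) {σ : ℕ → ℝ} {x y z : ℝ}
    (hxy : x ≤ y) (hyz : y ≤ z) :
    (z - y) * gFun ℓ J hJ σ x + (y - x) * gFun ℓ J hJ σ z ≤ (z - x) * gFun ℓ J hJ σ y := by
  obtain ⟨j, hj, hje⟩ := Finset.exists_mem_eq_inf' hJ (fun j => ((j : ℝ) - ℓ) * y + 2 * σ j)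
  have h1 := gFun_le (ℓ := ℓ) hJ (σ := σ) hj x
  have h2 := gFun_le (ℓ := ℓ) hJ (σ := σ) hj z
  have hy : gFun ℓ J hJ σ y = ((j : ℝ) - ℓ) * y + 2 * σ j := hje
  nlinarith [mul_le_mul_of_nonneg_left h1 (sub_nonneg.mpr hyz),
    mul_le_mul_of_nonneg_left h2 (sub_nonneg.mpr hxy)]


/-- if `1 < p_c = sup_{η ≥ 0} h(η) < ∞` (with some `σ_j = 0`), then `h`
is real-valued on `[0,∞)`, the supremum is attained at some `ηb ∈ (0,∞)`, and `h` is
nondecreasing on `[0,ηb]` and nonincreasing on `[ηb,∞)`. -/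
theorem stmt18 (n : ℕ) (hn : 1 ≤ n) (ℓ : ℕ) (J : Finset ℕ) (hJ : J.Nonempty)
    (σ : ℕ → ℝ) (hσ0 : ∀ j ∈ J, 0 ≤ σ j) (hσz : ∃ j ∈ J, σ j = 0)
    (hgt : (1 : ℝ≥0∞) < ⨆ η ∈ Set.Ici (0 : ℝ), hExt n ℓ J hJ σ η)
    (hlt : (⨆ η ∈ Set.Ici (0 : ℝ), hExt n ℓ J hJ σ η) < ⊤) :
    (∀ η : ℝ, 0 ≤ η → gFun ℓ J hJ σ η < (n : ℝ) + η) ∧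
    ∃ ηb : ℝ, 0 < ηb ∧
      ENNReal.ofReal (hFun n ℓ J hJ σ ηb) = (⨆ η ∈ Set.Ici (0 : ℝ), hExt n ℓ J hJ σ η) ∧
      (∀ η : ℝ, 0 ≤ η → hFun n ℓ J hJ σ η ≤ hFun n ℓ J hJ σ ηb) ∧
      MonotoneOn (hFun n ℓ J hJ σ) (Set.Icc 0 ηb) ∧
      AntitoneOn (hFun n ℓ J hJ σ) (Set.Ici ηb) := by
  have hn1 : (1 : ℝ) ≤ (n : ℝ) := by exact_mod_cast hn
  -- Step A: g(η) < n + η on [0,∞)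
  have hA : ∀ η : ℝ, 0 ≤ η → gFun ℓ J hJ σ η < (n : ℝ) + η := by
    intro η hη
    by_contra hcon
    have htop : hExt n ℓ J hJ σ η = ⊤ := if_neg hcon
    have hle : hExt n ℓ J hJ σ η ≤ ⨆ η ∈ Set.Ici (0 : ℝ), hExt n ℓ J hJ σ η :=
      le_biSup _ (Set.mem_Ici.mpr hη)
    rw [htop, top_le_iff] at hle
    exact absurd hle.symm (ne_of_lt hlt).symm
  -- Denominator positivity
  have hD : ∀ η : ℝ, 0 ≤ η → 0 < (n : ℝ) + η - gFun ℓ J hJ σ η := by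
    intro η hη; linarith [hA η hη]
  have hNum : ∀ η : ℝ, 0 ≤ η → 0 < (n : ℝ) + η := by intro η hη; linarith
  have hExt_eq : ∀ η : ℝ, 0 ≤ η →
      hExt n ℓ J hJ σ η = ENNReal.ofReal (hFun n ℓ J hJ σ η) := fun η hη => if_pos (hA η hη)
  -- cross-multiplication characterization
  have hcross : ∀ a b : ℝ, 0 ≤ a → 0 ≤ b →
      (hFun n ℓ J hJ σ a ≤ hFun n ℓ J hJ σ b ↔
        gFun ℓ J hJ σ a * ((n : ℝ) + b) ≤ gFun ℓ J hJ σ b * ((n : ℝ) + a)) := by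
    intro a b ha hb
    unfold hFun
    rw [div_le_div_iff₀ (hD a ha) (hD b hb)]
    constructor <;> intro H <;> nlinarith
  -- g(0) = 0 and h(0) = 1
  have hg0 : gFun ℓ J hJ σ 0 = 0 := by
    apply le_antisymm
    · obtain ⟨j, hjJ, hjz⟩ := hσz
      have := gFun_le (ℓ := ℓ) hJ (σ := σ) hjJ 0
      simpa [hjz] using this
    · apply Finset.le_inf'
      intro j hj
      have := hσ0 j hj
      simp only [mul_zero, zero_add]
      linarith
  have hh0 : hFun n ℓ J hJ σ 0 = 1 := by
    unfold hFun
    rw [hg0]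
    simp only [add_zero, sub_zero]
    exact div_self (ne_of_gt (by linarith))
  -- extract η₀ with h(η₀) > 1
  obtain ⟨η₀, hη₀0, hη₀⟩ : ∃ η₀ : ℝ, 0 ≤ η₀ ∧ 1 < hFun n ℓ J hJ σ η₀ := by
    rw [lt_iSup_iff] at hgt
    obtain ⟨η, hη⟩ := hgt
    rw [lt_iSup_iff] at hη
    obtain ⟨hmem, hη⟩ := hη
    rw [hExt_eq η hmem] at hη
    exact ⟨η, hmem, ENNReal.one_lt_ofReal.mp hη⟩
  have hgη₀ : 0 < gFun ℓ J hJ σ η₀ := by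
    unfold hFun at hη₀
    rw [lt_div_iff₀ (hD η₀ hη₀0)] at hη₀
    linarith
  have hη₀pos : 0 < η₀ := by
    rcases lt_or_eq_of_le hη₀0 with h | h
    · exact h
    · exfalso; rw [← h, hg0] at hgη₀; exact lt_irrefl 0 hgη₀
  -- there is j₀ ∈ J with j₀ ≤ ℓ (else sup = ⊤)
  obtain ⟨j₀, hj₀J, hj₀⟩ : ∃ j ∈ J, (j : ℝ) ≤ (ℓ : ℝ) := by
    by_contra hcon
    push_neg at hcon
    have hslope : ∀ j ∈ J, (1 : ℝ) ≤ (j : ℝ) - (ℓ : ℝ) := by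
      intro j hj
      have : (ℓ : ℝ) < j := hcon j hj
      have : ℓ < j := by exact_mod_cast this
      have : ℓ + 1 ≤ j := this
      have : ((ℓ + 1 : ℕ) : ℝ) ≤ (j : ℝ) := by exact_mod_cast this
      push_cast at this
      linarith
    have hglb : ∀ η : ℝ, 0 ≤ η → η ≤ gFun ℓ J hJ σ η := by
      intro η hη
      apply Finset.le_inf'
      intro j hj
      have h1 := hslope j hj
      have h2 := hσ0 j hj
      nlinarith
    set S := ⨆ η ∈ Set.Ici (0 : ℝ), hExt n ℓ J hJ σ η with hS
    have hSne : S ≠ ⊤ := ne_of_lt hlt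
    set M := S.toReal with hM
    have hbound : ∀ η : ℝ, 0 ≤ η → hFun n ℓ J hJ σ η ≤ M := by
      intro η hη
      have h1 : hExt n ℓ J hJ σ η ≤ S := le_biSup _ (Set.mem_Ici.mpr hη)
      rw [hExt_eq η hη] at h1
      exact (ENNReal.ofReal_le_iff_le_toReal hSne).mp h1
    set η₁ : ℝ := (n : ℝ) * (max M 0 + 1) with hη₁
    have hη₁0 : 0 ≤ η₁ := by
      have : (0:ℝ) ≤ max M 0 + 1 := by positivity
      positivity
    have hlow : ((n : ℝ) + η₁) / (n : ℝ) ≤ hFun n ℓ J hJ σ η₁ := by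
      unfold hFun
      apply div_le_div_of_nonneg_left (by linarith) (hD η₁ hη₁0)
      linarith [hglb η₁ hη₁0]
    have hval : M < ((n : ℝ) + η₁) / (n : ℝ) := by
      rw [lt_div_iff₀ (by linarith : (0:ℝ) < (n:ℝ))]
      have hM0 : M ≤ max M 0 := le_max_left _ _
      nlinarith [le_max_left M 0, le_max_right M 0]
    linarith [hbound η₁ hη₁0, hlow]
  have hgC : ∀ η : ℝ, 0 ≤ η → gFun ℓ J hJ σ η ≤ 2 * σ j₀ := by
    intro η hη
    have h1 := gFun_le (ℓ := ℓ) hJ (σ := σ) hj₀J η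
    nlinarith
  have hC0 : 0 ≤ 2 * σ j₀ := by linarith [hσ0 j₀ hj₀J]
  -- maximum on a compact interval
  set C := 2 * σ j₀ with hCdef
  set R : ℝ := max η₀ (C * ((n : ℝ) + η₀) / gFun ℓ J hJ σ η₀) with hR
  have hR0 : 0 ≤ R := le_trans hη₀0 (le_max_left _ _)
  have hcont : ContinuousOn (hFun n ℓ J hJ σ) (Set.Icc 0 R) := by
    apply ContinuousOn.div
    · exact (continuous_const.add continuous_id).continuousOn
    · exact ((continuous_const.add continuous_id).sub (gFun_cont hJ)).continuousOn
    · intro x hx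
      exact ne_of_gt (hD x hx.1)
  obtain ⟨ηb, hηbmem, hmax⟩ :=
    isCompact_Icc.exists_isMaxOn (Set.nonempty_Icc.mpr hR0) hcont
  have hηb0 : 0 ≤ ηb := hηbmem.1
  -- global maximum
  have hglob : ∀ η : ℝ, 0 ≤ η → hFun n ℓ J hJ σ η ≤ hFun n ℓ J hJ σ ηb := by
    intro η hη
    by_cases hcase : η ≤ R
    · exact hmax ⟨hη, hcase⟩
    · push_neg at hcase
      have hη₀mem : η₀ ∈ Set.Icc (0:ℝ) R := ⟨hη₀0, le_max_left _ _⟩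
      have step : hFun n ℓ J hJ σ η ≤ hFun n ℓ J hJ σ η₀ := by
        rw [hcross η η₀ hη hη₀0]
        have h1 : gFun ℓ J hJ σ η * ((n : ℝ) + η₀) ≤ C * ((n : ℝ) + η₀) :=
          mul_le_mul_of_nonneg_right (hgC η hη) (by linarith [hNum η₀ hη₀0])
        have h2 : C * ((n : ℝ) + η₀) / gFun ℓ J hJ σ η₀ ≤ R := le_max_right _ _
        have h3 : C * ((n : ℝ) + η₀) ≤ gFun ℓ J hJ σ η₀ * R := by
          rw [div_le_iff₀ hgη₀] at h2
          linarith
        have h4 : gFun ℓ J hJ σ η₀ * R ≤ gFun ℓ J hJ σ η₀ * ((n : ℝ) + η) := by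
          apply mul_le_mul_of_nonneg_left _ (le_of_lt hgη₀)
          linarith
        linarith
      exact le_trans step (hmax hη₀mem)
  have hmaxval : 1 < hFun n ℓ J hJ σ ηb := lt_of_lt_of_le hη₀ (hglob η₀ hη₀0)
  have hηbpos : 0 < ηb := by
    rcases lt_or_eq_of_le hηb0 with h | h
    · exact h
    · exfalso; rw [← h, hh0] at hmaxval; exact lt_irrefl 1 hmaxval
  refine ⟨hA, ηb, hηbpos, ?_, hglob, ?_, ?_⟩
  -- sup equality
  · apply le_antisymm
    · rw [← hExt_eq ηb hηb0]
      exact le_biSup _ (Set.mem_Ici.mpr hηb0)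
    · apply iSup₂_le
      intro η hη
      rw [hExt_eq η hη]
      exact ENNReal.ofReal_le_ofReal (hglob η hη)
  -- MonotoneOn [0, ηb]
  · intro x hx y hy hxy
    rcases lt_or_eq_of_le hx.2 with hlt' | heq
    · rw [hcross x y hx.1 hy.1]
      have hconc := gFun_concave (ℓ := ℓ) hJ (σ := σ) hxy hy.2
      have hmx : gFun ℓ J hJ σ x * ((n : ℝ) + ηb) ≤ gFun ℓ J hJ σ ηb * ((n : ℝ) + x) :=
        (hcross x ηb hx.1 hηb0).mp (hglob x hx.1)
      have k1 : ((n : ℝ) + x) * ((ηb - y) * gFun ℓ J hJ σ x + (y - x) * gFun ℓ J hJ σ ηb) ≤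
          ((n : ℝ) + x) * ((ηb - x) * gFun ℓ J hJ σ y) :=
        mul_le_mul_of_nonneg_left hconc (le_of_lt (hNum x hx.1))
      have k2 : (y - x) * (gFun ℓ J hJ σ x * ((n : ℝ) + ηb)) ≤
          (y - x) * (gFun ℓ J hJ σ ηb * ((n : ℝ) + x)) :=
        mul_le_mul_of_nonneg_left hmx (sub_nonneg.mpr hxy)
      have key : (ηb - x) * (gFun ℓ J hJ σ x * ((n : ℝ) + y)) ≤
          (ηb - x) * (gFun ℓ J hJ σ y * ((n : ℝ) + x)) := by nlinarith
      exact le_of_mul_le_mul_left key (by linarith)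
    · have hyb : y = ηb := le_antisymm hy.2 (heq ▸ hxy)
      rw [heq, hyb]
  -- AntitoneOn [ηb, ∞)
  · intro x hx y hy hxy
    have hx0 : 0 ≤ x := le_trans hηb0 hx
    have hy0 : 0 ≤ y := le_trans hηb0 hy
    rcases lt_or_eq_of_le (le_trans (Set.mem_Ici.mp hx) hxy) with hlt' | heq
    · rw [hcross y x hy0 hx0]
      have hconc := gFun_concave (ℓ := ℓ) hJ (σ := σ) (Set.mem_Ici.mp hx) hxy
      have hmy : gFun ℓ J hJ σ y * ((n : ℝ) + ηb) ≤ gFun ℓ J hJ σ ηb * ((n : ℝ) + y) :=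
        (hcross y ηb hy0 hηb0).mp (hglob y hy0)
      have k1 : ((n : ℝ) + y) * ((y - x) * gFun ℓ J hJ σ ηb + (x - ηb) * gFun ℓ J hJ σ y) ≤
          ((n : ℝ) + y) * ((y - ηb) * gFun ℓ J hJ σ x) :=
        mul_le_mul_of_nonneg_left hconc (le_of_lt (hNum y hy0))
      have k2 : (y - x) * (gFun ℓ J hJ σ y * ((n : ℝ) + ηb)) ≤
          (y - x) * (gFun ℓ J hJ σ ηb * ((n : ℝ) + y)) :=
        mul_le_mul_of_nonneg_left hmy (sub_nonneg.mpr hxy)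
      have key : (y - ηb) * (gFun ℓ J hJ σ y * ((n : ℝ) + x)) ≤
          (y - ηb) * (gFun ℓ J hJ σ x * ((n : ℝ) + y)) := by nlinarith
      exact le_of_mul_le_mul_left key (by linarith)
    · have hxb : x = ηb := le_antisymm (heq ▸ hxy) (Set.mem_Ici.mp hx)
      have hyb : y = ηb := le_antisymm heq.symm.le (Set.mem_Ici.mp hy)
      rw [hxb, hyb]
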